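/- Let β be a real number with β ≥ e + e⁻¹, and let p ∈ H₁ with p(z) ≠ 0 for all z ∈ 𝔻. If the function z ↦ p(z) + β·z·p′(z)/p(z) is subordinate to z ↦ e^z on 𝔻, then p is subordinate to z ↦ e^z on 𝔻. -/

import Mathlib

open Complex

noncomputable section

/-- The open unit disk in the complex plane. -/
def unitDisk : Set ℂ := Metric.ball 0 1

/-- `f` is subordinate to `g` on the open unit disk: there is an analytic
Schwarz function `w` with `w 0 = 0`, `‖w z‖ < 1` on the disk, and `f = g ∘ w`. -/
def Subord (f g : ℂ → ℂ) : Prop :=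
  ∃ w : ℂ → ℂ, DifferentiableOn ℂ w unitDisk ∧ w 0 = 0 ∧
    (∀ z ∈ unitDisk, ‖w z‖ < 1) ∧ ∀ z ∈ unitDisk, f z = g (w z)

open Metric Set intervalIntegral MeasureTheory


lemma cos_le_exp_aux {x : ℝ} (hx0 : 0 ≤ x) (hx2 : x ≤ 2) :
    Real.cos x ≤ Real.exp (-(x ^ 2 / 2)) := by
  rcases eq_or_lt_of_le hx0 with h | h
  · simp [← h]
  · have h1 : 0 < x / 2 := by linarith
    have h2 : x / 2 ≤ 1 := by linarith
    have hs := Real.sin_gt_sub_cube h1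
    have hcube : (x / 2) ^ 3 ≤ x / 2 := by
      calc (x / 2) ^ 3 ≤ (x / 2) ^ 1 := pow_le_pow_of_le_one h1.le h2 (by norm_num)
        _ = x / 2 := pow_one _
    have hpos : 0 ≤ x / 2 - (x / 2) ^ 3 / 4 := by linarith
    have hsq : Real.sin (x / 2) ^ 2 = 1 / 2 - Real.cos x / 2 := by
      have := Real.sin_sq_eq_half_sub (x / 2)
      rw [show 2 * (x / 2) = x by ring] at this
      exact this
    have hcos : Real.cos x ≤ 1 - 2 * (x / 2 - (x / 2) ^ 3 / 4) ^ 2 := by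
      nlinarith [sq_nonneg (Real.sin (x/2) - (x / 2 - (x / 2) ^ 3 / 4)), mul_self_le_mul_self hpos (by linarith [pow_nonneg h1.le 3] : x / 2 - (x / 2) ^ 3 / 4 ≤ Real.sin (x / 2))]
    have hexp1 : (1 - x ^ 2 / 4) ≤ Real.exp (-(x ^ 2 / 4)) := by
      have := Real.add_one_le_exp (-(x ^ 2 / 4)); linarith
    have hnn : 0 ≤ 1 - x ^ 2 / 4 := by nlinarith
    have hexp2 : (1 - x ^ 2 / 4) ^ 2 ≤ Real.exp (-(x ^ 2 / 2)) := by
      have h2 : Real.exp (-(x ^ 2 / 4)) ^ 2 = Real.exp (-(x ^ 2 / 2)) := by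
        rw [sq, ← Real.exp_add]; ring_nf
      rw [← h2]
      exact pow_le_pow_left₀ hnn hexp1 2
    have hpoly : 1 - 2 * (x / 2 - (x / 2) ^ 3 / 4) ^ 2 ≤ (1 - x ^ 2 / 4) ^ 2 := by
      nlinarith [pow_nonneg hx0 6, pow_nonneg hx0 4, pow_nonneg hx0 2]
    linarith

lemma key_phi {φ : ℝ} (h0 : 0 ≤ φ) (hπ : φ ≤ Real.pi) :
    Real.exp (-Real.cos φ) * Real.cos (φ + Real.sin φ) ≤ (Real.exp 1)⁻¹ := by
  set x := φ + Real.sin φ with hxdef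
  have hsin : 0 ≤ Real.sin φ := Real.sin_nonneg_of_nonneg_of_le_pi h0 hπ
  have hx0 : 0 ≤ x := by positivity
  rcases le_or_gt (Real.cos x) 0 with hc | hc
  · have : Real.exp (-Real.cos φ) * Real.cos x ≤ 0 :=
      mul_nonpos_of_nonneg_of_nonpos (Real.exp_pos _).le hc
    exact this.trans (by positivity)
  · have hxpi : x ≤ Real.pi := by
      have h1 : Real.sin φ = Real.sin (Real.pi - φ) := (Real.sin_pi_sub φ).symm
      have h2 : Real.sin (Real.pi - φ) ≤ Real.pi - φ := Real.sin_le (by linarith)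
      rw [hxdef]; linarith [h1 ▸ h2]
    have hx2 : x ≤ 2 := by
      have hlt : x < Real.pi / 2 := by
        by_contra hge
        push_neg at hge
        have := Real.cos_nonpos_of_pi_div_two_le_of_le hge
          (by linarith [Real.pi_pos] : x ≤ Real.pi + Real.pi / 2)
        linarith
      linarith [Real.pi_le_four]
    calc Real.exp (-Real.cos φ) * Real.cos x
        ≤ Real.exp (-Real.cos φ) * Real.exp (-(x ^ 2 / 2)) :=
          mul_le_mul_of_nonneg_left (cos_le_exp_aux hx0 hx2) (Real.exp_pos _).le
      _ = Real.exp (-Real.cos φ + -(x ^ 2 / 2)) := (Real.exp_add _ _).symm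
      _ ≤ Real.exp (-1) := by
          apply Real.exp_le_exp.2
          have hcosφ : 1 - φ ^ 2 / 2 ≤ Real.cos φ := Real.one_sub_sq_div_two_le_cos
          have hxφ : φ ^ 2 ≤ x ^ 2 := by nlinarith
          nlinarith
      _ = (Real.exp 1)⁻¹ := by rw [Real.exp_neg]

lemma key_ineq {u : ℂ} (h : ‖u‖ = 1) :
    -(Real.exp 1)⁻¹ ≤ (Complex.exp u * (starRingEnd ℂ) u).re := by
  have hns : Complex.normSq u = 1 := by
    rw [← Complex.sq_norm, h]; norm_num
  have hc2 : u.re ^ 2 + u.im ^ 2 = 1 := by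
    have := Complex.normSq_apply u; rw [hns] at this; nlinarith [this]
  have hre : (Complex.exp u * (starRingEnd ℂ) u).re
      = Real.exp u.re * (u.re * Real.cos u.im + u.im * Real.sin u.im) := by
    simp [Complex.mul_re, Complex.exp_re, Complex.exp_im, Complex.conj_re, Complex.conj_im]
    ring
  have hre1 : -1 ≤ u.re := by nlinarith
  have hre2 : u.re ≤ 1 := by nlinarith
  set θ := Real.arccos u.re with hθ
  set φ := Real.pi - θ with hφ
  have h0 : 0 ≤ φ := by rw [hφ]; linarith [Real.arccos_le_pi u.re]
  have hπ : φ ≤ Real.pi := by rw [hφ]; linarith [Real.arccos_nonneg u.re]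
  have hcosφ : Real.cos φ = -u.re := by
    rw [hφ, Real.cos_pi_sub, hθ, Real.cos_arccos hre1 hre2]
  have hsinφ : Real.sin φ = |u.im| := by
    rw [hφ, Real.sin_pi_sub, hθ, Real.sin_arccos]
    rw [show 1 - u.re ^ 2 = u.im ^ 2 by linarith]
    exact Real.sqrt_sq_eq_abs u.im
  have hkey := key_phi h0 hπ
  rw [hcosφ, neg_neg] at hkey
  have hcosadd : Real.cos (φ + |u.im|) =
      -(u.re * Real.cos u.im + u.im * Real.sin u.im) := by
    rw [Real.cos_add, hcosφ, hsinφ, Real.cos_abs]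
    rcases abs_cases u.im with ⟨h1, _⟩ | ⟨h1, _⟩ <;> rw [h1] <;>
      simp [Real.sin_neg] <;> ring
  rw [show φ + Real.sin φ = φ + |u.im| by rw [hsinφ], hcosadd] at hkey
  rw [hre]
  nlinarith [Real.exp_pos u.re]

lemma outside {β m : ℝ} (hβ : Real.exp 1 + (Real.exp 1)⁻¹ ≤ β) (hm : 1 ≤ m) {u a : ℂ}
    (hu : ‖u‖ = 1) (ha : ‖a‖ < 1) :
    Complex.exp u + (β : ℂ) * ((m : ℂ) * u) ≠ Complex.exp a := by
  intro heq
  have hepos : (0:ℝ) < Real.exp 1 := Real.exp_pos 1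
  have hinvpos : (0:ℝ) < (Real.exp 1)⁻¹ := by positivity
  have hβpos : (0:ℝ) < β := by linarith
  have hβm : Real.exp 1 + (Real.exp 1)⁻¹ ≤ β * m := by nlinarith
  have hna : ‖Complex.exp a‖ < Real.exp 1 := by
    rw [Complex.norm_exp]
    exact Real.exp_lt_exp.2
      (lt_of_le_of_lt (le_trans (le_abs_self a.re) (Complex.abs_re_le_norm a))
        ha)
  have hns : Complex.normSq u = 1 := by
    rw [← Complex.sq_norm, hu]; norm_num
  have huu : u * (starRingEnd ℂ) u = 1 := by
    rw [Complex.mul_conj, hns, Complex.ofReal_one]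
  set X : ℂ := (starRingEnd ℂ) u * Complex.exp u + ((β : ℂ) * (m : ℂ)) with hX
  have hfac : u * X = Complex.exp u + (β : ℂ) * ((m : ℂ) * u) := by
    calc u * X = (u * (starRingEnd ℂ) u) * Complex.exp u + ((β : ℂ) * (m : ℂ)) * u := by
          rw [hX]; ring
      _ = Complex.exp u + (β : ℂ) * ((m : ℂ) * u) := by rw [huu]; ring
  have hXre : Real.exp 1 ≤ X.re := by
    have h1 := key_ineq hu
    have h2 : X.re = (Complex.exp u * (starRingEnd ℂ) u).re + β * m := by
      rw [hX, Complex.add_re, mul_comm ((starRingEnd ℂ) u), ← Complex.ofReal_mul,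
        Complex.ofReal_re]
    rw [h2]; linarith
  have hle : Real.exp 1 ≤ ‖u * X‖ := by
    rw [norm_mul, hu, one_mul]
    exact le_trans hXre (le_trans (Complex.re_le_norm X) le_rfl)
  rw [hfac, heq] at hle
  linarith


lemma exists_primitive {g : ℂ → ℂ} (hg : DifferentiableOn ℂ g (ball (0:ℂ) 1)) :
    ∃ G : ℂ → ℂ, G 0 = 0 ∧ ∀ z ∈ ball (0:ℂ) 1, HasDerivAt G (g z) z := by
  have hgc : ContinuousOn g (ball (0:ℂ) 1) := hg.continuousOn
  have hga : AnalyticOnNhd ℂ g (ball (0:ℂ) 1) := hg.analyticOnNhd isOpen_ball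
  have hg'c : ContinuousOn (deriv g) (ball (0:ℂ) 1) := hga.deriv.differentiableOn.continuousOn
  set F : ℂ → ℝ → ℂ := fun x t => x * g ((t:ℂ) * x) with hF
  set F' : ℂ → ℝ → ℂ := fun x t => g ((t:ℂ) * x) + x * (deriv g ((t:ℂ) * x) * (t:ℂ)) with hF'
  refine ⟨fun z => ∫ t in (0:ℝ)..1, F z t, by simp [hF], ?_⟩
  intro z₀ hz₀m
  have hz₀ : ‖z₀‖ < 1 := mem_ball_zero_iff.1 hz₀m
  set r : ℝ := (1 + ‖z₀‖) / 2 with hr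
  set ε : ℝ := (1 - ‖z₀‖) / 2 with hε
  have hz0 : (0:ℝ) ≤ ‖z₀‖ := norm_nonneg _
  have hεpos : 0 < ε := by rw [hε]; linarith
  have hr1 : r < 1 := by rw [hr]; linarith
  have hrpos : 0 < r := by rw [hr]; linarith
  have hxmem : ∀ x : ℂ, x ∈ ball z₀ ε → ‖x‖ < r := by
    intro x hx
    rw [mem_ball, dist_eq_norm] at hx
    calc ‖x‖ = ‖z₀ + (x - z₀)‖ := by ring_nf
      _ ≤ ‖z₀‖ + ‖x - z₀‖ := norm_add_le _ _
      _ < ‖z₀‖ + ε := by linarith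
      _ = r := by rw [hε, hr]; ring
  have htx : ∀ x : ℂ, ‖x‖ < r → ∀ t : ℝ, 0 ≤ t → t ≤ 1 → ‖(t:ℂ) * x‖ ≤ ‖x‖ := by
    intro x hx t ht0 ht1
    rw [norm_mul, Complex.norm_real, Real.norm_eq_abs, _root_.abs_of_nonneg ht0]
    nlinarith [norm_nonneg x]
  have hball : ∀ y : ℂ, ‖y‖ ≤ r → y ∈ ball (0:ℂ) 1 := by
    intro y hy; rw [mem_ball_zero_iff]; linarith
  obtain ⟨C₁, hC₁⟩ := (isCompact_closedBall (0:ℂ) r).exists_bound_of_continuousOn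
    (hgc.mono (closedBall_subset_ball hr1))
  obtain ⟨C₂, hC₂⟩ := (isCompact_closedBall (0:ℂ) r).exists_bound_of_continuousOn
    (hg'c.mono (closedBall_subset_ball hr1))
  have hC₁0 : 0 ≤ C₁ := le_trans (norm_nonneg _) (hC₁ 0 (mem_closedBall_self hrpos.le))
  have hC₂0 : 0 ≤ C₂ := le_trans (norm_nonneg _) (hC₂ 0 (mem_closedBall_self hrpos.le))
  -- continuity of t ↦ F x t on [0,1] for ‖x‖ < r
  have hFcont : ∀ x : ℂ, ‖x‖ < r → ContinuousOn (F x) (Set.Icc (0:ℝ) 1) := by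
    intro x hx
    apply ContinuousOn.mul continuousOn_const
    apply hgc.comp (Complex.continuous_ofReal.mul continuous_const).continuousOn
    intro t ht
    exact hball _ (le_trans (htx x hx t ht.1 ht.2) hx.le)
  have hF'cont : ∀ x : ℂ, ‖x‖ < r → ContinuousOn (F' x) (Set.Icc (0:ℝ) 1) := by
    intro x hx
    have hmaps : Set.MapsTo (fun t : ℝ => (t:ℂ) * x) (Set.Icc (0:ℝ) 1) (ball (0:ℂ) 1) :=
      fun t ht => hball _ (le_trans (htx x hx t ht.1 ht.2) hx.le)
    have hc1 : ContinuousOn (fun t : ℝ => g ((t:ℂ) * x)) (Set.Icc (0:ℝ) 1) :=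
      hgc.comp (Complex.continuous_ofReal.mul continuous_const).continuousOn hmaps
    have hc2 : ContinuousOn (fun t : ℝ => deriv g ((t:ℂ) * x)) (Set.Icc (0:ℝ) 1) :=
      hg'c.comp (Complex.continuous_ofReal.mul continuous_const).continuousOn hmaps
    exact hc1.add (ContinuousOn.mul continuousOn_const
      (hc2.mul Complex.continuous_ofReal.continuousOn))
  have hIoc : Set.uIoc (0:ℝ) 1 ⊆ Set.Icc (0:ℝ) 1 := by
    rw [Set.uIoc_of_le (by norm_num : (0:ℝ) ≤ 1)]
    exact Set.Ioc_subset_Icc_self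
  have hz₀r : ‖z₀‖ < r := by rw [hr]; linarith
  -- main application
  have key := intervalIntegral.hasDerivAt_integral_of_dominated_loc_of_deriv_le
    (F := F) (F' := F') (x₀ := z₀) (a := (0:ℝ)) (b := 1) (μ := volume)
    (bound := fun _ => C₁ + C₂) (ball_mem_nhds z₀ hεpos)
    (Filter.eventually_of_mem (ball_mem_nhds z₀ hεpos) (fun x hx =>
      ((hFcont x (hxmem x hx)).mono hIoc).aestronglyMeasurable measurableSet_uIoc))
    (((hFcont z₀ hz₀r).mono (by rw [Set.uIcc_of_le (by norm_num : (0:ℝ) ≤ 1)] : Set.uIcc (0:ℝ) 1 ⊆ Set.Icc 0 1)).intervalIntegrable)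
    (((hF'cont z₀ hz₀r).mono hIoc).aestronglyMeasurable measurableSet_uIoc)
    (Filter.Eventually.of_forall (fun t ht x hx => by
      have hxr := hxmem x hx
      have ht' := hIoc ht
      have h1 : ‖(t:ℂ) * x‖ ≤ r := le_trans (htx x hxr t ht'.1 ht'.2) hxr.le
      have hg1 : ‖g ((t:ℂ) * x)‖ ≤ C₁ := hC₁ _ (mem_closedBall_zero_iff.2 h1)
      have hg2 : ‖deriv g ((t:ℂ) * x)‖ ≤ C₂ := hC₂ _ (mem_closedBall_zero_iff.2 h1)
      calc ‖F' x t‖ ≤ ‖g ((t:ℂ) * x)‖ + ‖x * (deriv g ((t:ℂ) * x) * (t:ℂ))‖ := norm_add_le _ _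
        _ ≤ C₁ + C₂ := by
            refine add_le_add hg1 ?_
            rw [norm_mul, norm_mul, Complex.norm_real, Real.norm_eq_abs,
              _root_.abs_of_nonneg ht'.1]
            have hstep : ‖deriv g ((t:ℂ) * x)‖ * t ≤ C₂ := by nlinarith [mul_le_mul_of_nonneg_left ht'.2 (norm_nonneg (deriv g ((t:ℂ) * x)))]
            calc ‖x‖ * (‖deriv g ((t:ℂ) * x)‖ * t) ≤ 1 * C₂ :=
                  mul_le_mul (by linarith) hstep
                    (mul_nonneg (norm_nonneg _) ht'.1) (by norm_num)
              _ = C₂ := one_mul _))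
    (intervalIntegrable_const)
    (Filter.Eventually.of_forall (fun t ht x hx => by
      have hxr := hxmem x hx
      have ht' := hIoc ht
      have hmem : (t:ℂ) * x ∈ ball (0:ℂ) 1 :=
        hball _ (le_trans (htx x hxr t ht'.1 ht'.2) hxr.le)
      have hgat : HasDerivAt g (deriv g ((t:ℂ) * x)) ((t:ℂ) * x) :=
        (hg.differentiableAt (isOpen_ball.mem_nhds hmem)).hasDerivAt
      have hinner : HasDerivAt (fun y : ℂ => (t:ℂ) * y) (t:ℂ) x := by
        simpa using (hasDerivAt_id x).const_mul (t:ℂ)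
      have hcomp : HasDerivAt (fun y : ℂ => g ((t:ℂ) * y)) (deriv g ((t:ℂ) * x) * (t:ℂ)) x :=
        HasDerivAt.comp x hgat hinner
      have := (hasDerivAt_id x).mul hcomp
      simpa [hF, hF', Pi.mul_def] using this))
  obtain ⟨-, hkey⟩ := key
  -- compute the integral of F' z₀
  have hint : (∫ t in (0:ℝ)..1, F' z₀ t) = g z₀ := by
    have hΦ : ∀ t ∈ Set.uIcc (0:ℝ) 1,
        HasDerivAt (fun s : ℝ => (s:ℂ) * g ((s:ℂ) * z₀)) (F' z₀ t) t := by
      intro t ht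
      rw [Set.uIcc_of_le (by norm_num : (0:ℝ) ≤ 1)] at ht
      have hmem : (t:ℂ) * z₀ ∈ ball (0:ℂ) 1 :=
        hball _ (le_trans (htx z₀ hz₀r t ht.1 ht.2) hz₀r.le)
      have hgat : HasDerivAt g (deriv g ((t:ℂ) * z₀)) ((t:ℂ) * z₀) :=
        (hg.differentiableAt (isOpen_ball.mem_nhds hmem)).hasDerivAt
      have hinner : HasDerivAt (fun w : ℂ => w * z₀) z₀ (t:ℂ) := by
        simpa using (hasDerivAt_id (t:ℂ)).mul_const z₀
      have hcomp : HasDerivAt (fun w : ℂ => g (w * z₀)) (deriv g ((t:ℂ) * z₀) * z₀) (t:ℂ) :=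
        HasDerivAt.comp (t:ℂ) hgat hinner
      have hΨ : HasDerivAt (fun w : ℂ => w * g (w * z₀))
          (1 * g ((t:ℂ) * z₀) + (t:ℂ) * (deriv g ((t:ℂ) * z₀) * z₀)) (t:ℂ) :=
        (hasDerivAt_id (t:ℂ)).mul hcomp
      have hreal := hΨ.comp_ofReal
      have heq : 1 * g ((t:ℂ) * z₀) + (t:ℂ) * (deriv g ((t:ℂ) * z₀) * z₀) = F' z₀ t := by
        rw [hF']; ring
      rw [heq] at hreal
      exact hreal
    have hintg : IntervalIntegrable (F' z₀) volume 0 1 :=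
      ((hF'cont z₀ hz₀r).mono (by rw [Set.uIcc_of_le (by norm_num : (0:ℝ) ≤ 1)] : Set.uIcc (0:ℝ) 1 ⊆ Set.Icc 0 1)).intervalIntegrable
    rw [intervalIntegral.integral_eq_sub_of_hasDerivAt hΦ hintg]
    simp
  rw [hint] at hkey
  exact hkey

lemma exists_log {p : ℂ → ℂ} (hp : DifferentiableOn ℂ p (ball (0:ℂ) 1)) (hp0 : p 0 = 1)
    (hpne : ∀ z ∈ ball (0:ℂ) 1, p z ≠ 0) :
    ∃ q : ℂ → ℂ, q 0 = 0 ∧ (∀ z ∈ ball (0:ℂ) 1, HasDerivAt q (deriv p z / p z) z) ∧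
      ∀ z ∈ ball (0:ℂ) 1, p z = Complex.exp (q z) := by
  have hp' : DifferentiableOn ℂ (deriv p) (ball (0:ℂ) 1) :=
    (hp.analyticOnNhd isOpen_ball).deriv.differentiableOn
  have hgd : DifferentiableOn ℂ (fun z => deriv p z / p z) (ball (0:ℂ) 1) :=
    hp'.div hp hpne
  obtain ⟨q, hq0, hqd⟩ := exists_primitive hgd
  refine ⟨q, hq0, hqd, ?_⟩
  have hconst : ∀ z ∈ ball (0:ℂ) 1, p z * Complex.exp (-q z) = 1 := by
    have hd : ∀ z ∈ ball (0:ℂ) 1,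
        HasDerivAt (fun w => p w * Complex.exp (-q w)) 0 z := by
      intro z hz
      have hpz : HasDerivAt p (deriv p z) z :=
        (hp.differentiableAt (isOpen_ball.mem_nhds hz)).hasDerivAt
      have hqz : HasDerivAt q (deriv p z / p z) z := hqd z hz
      have hexp : HasDerivAt (fun w => Complex.exp (-q w))
          (Complex.exp (-q z) * -(deriv p z / p z)) z := (hqz.neg).cexp
      have := hpz.mul hexp
      have hcancel : p z * (deriv p z / p z) = deriv p z :=
        mul_div_cancel₀ _ (hpne z hz)
      have heq : deriv p z * Complex.exp (-q z) +
          p z * (Complex.exp (-q z) * -(deriv p z / p z)) = 0 := by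
        have : p z * (Complex.exp (-q z) * -(deriv p z / p z))
            = -(Complex.exp (-q z) * (p z * (deriv p z / p z))) := by ring
        rw [this, hcancel]; ring
      rw [heq] at this
      exact this
    intro z hz
    have hdiffOn : DifferentiableOn ℂ (fun w => p w * Complex.exp (-q w)) (ball (0:ℂ) 1) :=
      fun w hw => ((hd w hw).differentiableAt).differentiableWithinAt
    have hfd : ∀ x ∈ ball (0:ℂ) 1,
        fderivWithin ℂ (fun w => p w * Complex.exp (-q w)) (ball (0:ℂ) 1) x = 0 := by
      intro x hx
      have h1 := ((hd x hx).hasFDerivAt).hasFDerivWithinAt.fderivWithin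
        (isOpen_ball.uniqueDiffWithinAt hx)
      rw [h1]
      ext
      simp [ContinuousLinearMap.smulRight_apply]
    have := (convex_ball (0:ℂ) 1).is_const_of_fderivWithin_eq_zero hdiffOn hfd hz
      (mem_ball_zero_iff.2 (by norm_num : ‖(0:ℂ)‖ < 1))
    rw [this, hp0, hq0]
    simp
  intro z hz
  have h1 := hconst z hz
  have h2 : p z * Complex.exp (-q z) * Complex.exp (q z) = Complex.exp (q z) := by
    rw [h1, one_mul]
  rw [mul_assoc, ← Complex.exp_add] at h2
  simpa using h2


lemma hasDerivAt_re_comp {F : ℝ → ℂ} {F' : ℂ} {x : ℝ} (h : HasDerivAt F F' x) :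
    HasDerivAt (fun t => (F t).re) F'.re x :=
  Complex.reCLM.hasFDerivAt.comp_hasDerivAt x h

lemma hasDerivAt_im_comp {F : ℝ → ℂ} {F' : ℂ} {x : ℝ} (h : HasDerivAt F F' x) :
    HasDerivAt (fun t => (F t).im) F'.im x :=
  Complex.imCLM.hasFDerivAt.comp_hasDerivAt x h

lemma jack {q : ℂ → ℂ} (hq : DifferentiableOn ℂ q (ball (0:ℂ) 1)) (h0 : q 0 = 0)
    {z1 : ℂ} (hz1 : z1 ∈ ball (0:ℂ) 1) (hq1 : 1 ≤ ‖q z1‖) :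
    ∃ z0 ∈ ball (0:ℂ) 1, ‖q z0‖ = 1 ∧
      ∃ m : ℝ, 1 ≤ m ∧ z0 * deriv q z0 = (m : ℝ) * q z0 := by
  have hr1 : ‖z1‖ < 1 := mem_ball_zero_iff.1 hz1
  set S : Set ℂ := closedBall (0:ℂ) ‖z1‖ ∩ {z | 1 ≤ ‖q z‖} with hS
  have hqc : ContinuousOn (fun z => ‖q z‖) (closedBall (0:ℂ) ‖z1‖) :=
    (hq.continuousOn.mono (closedBall_subset_ball hr1)).norm
  have hSclosed : IsClosed S :=
    hqc.preimage_isClosed_of_isClosed Metric.isClosed_closedBall (isClosed_Ici (a := (1:ℝ)))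
  have hScomp : IsCompact S :=
    (isCompact_closedBall (0:ℂ) ‖z1‖).of_isClosed_subset hSclosed inter_subset_left
  have hSne : S.Nonempty := ⟨z1, mem_closedBall_zero_iff.2 le_rfl, hq1⟩
  obtain ⟨z0, hz0S, hmin⟩ := hScomp.exists_isMinOn hSne continuous_norm.continuousOn
  have hmin' : ∀ y ∈ S, ‖z0‖ ≤ ‖y‖ := fun y hy => hmin hy
  have hz0r1 : ‖z0‖ ≤ ‖z1‖ := mem_closedBall_zero_iff.1 hz0S.1
  have hz0mem : z0 ∈ ball (0:ℂ) 1 := mem_ball_zero_iff.2 (lt_of_le_of_lt hz0r1 hr1)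
  have hz0ne : z0 ≠ 0 := by
    intro h
    have h2 := hz0S.2
    simp only [Set.mem_setOf_eq] at h2
    rw [h, h0] at h2
    simp at h2
    linarith
  have hz0pos : 0 < ‖z0‖ := norm_pos_iff.2 hz0ne
  -- everything inside radius ‖z0‖ has ‖q‖ ≤ 1
  have hle : ∀ z : ℂ, ‖z‖ ≤ ‖z0‖ → ‖q z‖ ≤ 1 := by
    intro z hz
    by_contra hgt
    push_neg at hgt
    have hzmem : z ∈ ball (0:ℂ) 1 :=
      mem_ball_zero_iff.2 (lt_of_le_of_lt (hz.trans hz0r1) hr1)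
    have hzne : z ≠ 0 := by
      intro h
      rw [h, h0] at hgt
      simp at hgt
      linarith
    have hznorm : 0 < ‖z‖ := norm_pos_iff.2 hzne
    have hcont : ContinuousAt (fun y => ‖q y‖) z :=
      ((hq.differentiableAt (isOpen_ball.mem_nhds hzmem)).continuousAt).norm
    have hnb : (fun y => ‖q y‖) ⁻¹' (Set.Ioi 1) ∈ nhds z :=
      hcont.preimage_mem_nhds (isOpen_Ioi.mem_nhds hgt)
    obtain ⟨δ, hδpos, hδ⟩ := Metric.mem_nhds_iff.1 hnb
    set cc : ℝ := min (δ / (2 * ‖z‖)) (1 / 2) with hcc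
    have hccpos : 0 < cc := lt_min (by positivity) (by norm_num)
    have hcc2 : cc ≤ 1 / 2 := min_le_right _ _
    set z' : ℂ := ((1 - cc : ℝ) : ℂ) * z with hz'
    have hdist : ‖z' - z‖ = cc * ‖z‖ := by
      rw [hz']
      have heq : ((1 - cc : ℝ) : ℂ) * z - z = -(((cc : ℝ) : ℂ) * z) := by
        push_cast; ring
      rw [heq, norm_neg, norm_mul, Complex.norm_real, Real.norm_eq_abs,
        abs_of_pos hccpos]
    have hz'ball : z' ∈ ball z δ := by
      rw [mem_ball, dist_eq_norm, hdist]
      calc cc * ‖z‖ ≤ (δ / (2 * ‖z‖)) * ‖z‖ :=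
            mul_le_mul_of_nonneg_right (min_le_left _ _) (norm_nonneg _)
        _ = δ / 2 := by
            have habs : ‖z‖ ≠ 0 := by
              exact hznorm.ne'
            field_simp [habs]
        _ < δ := by linarith
    have hz'q : 1 < ‖q z'‖ := hδ hz'ball
    have hz'norm : ‖z'‖ < ‖z‖ := by
      rw [hz', norm_mul, Complex.norm_real, Real.norm_eq_abs,
        abs_of_pos (by linarith : (0:ℝ) < 1 - cc)]
      nlinarith
    have hz'S : z' ∈ S := by
      refine ⟨mem_closedBall_zero_iff.2 (by linarith [hz.trans hz0r1]), hz'q.le⟩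
    have hc1 := hmin' z' hz'S
    linarith
  have hqz0 : ‖q z0‖ = 1 := le_antisymm (hle z0 le_rfl) hz0S.2
  -- the rescaled map φ
  set φ : ℂ → ℂ := fun lam => q (lam * z0) with hφ
  have hmemmul : ∀ lam : ℂ, ‖lam‖ ≤ 1 → lam * z0 ∈ ball (0:ℂ) 1 := by
    intro lam hlam
    rw [mem_ball_zero_iff, norm_mul]
    calc ‖lam‖ * ‖z0‖ ≤ 1 * ‖z0‖ := mul_le_mul_of_nonneg_right hlam (norm_nonneg _)
      _ < 1 := by rw [one_mul]; exact mem_ball_zero_iff.1 hz0mem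
  have hφd : DifferentiableOn ℂ φ (ball (0:ℂ) 1) := by
    intro lam hlam
    have h1 : DifferentiableAt ℂ q (lam * z0) :=
      hq.differentiableAt (isOpen_ball.mem_nhds (hmemmul lam (mem_ball_zero_iff.1 hlam).le))
    exact (h1.comp lam (differentiableAt_id.mul_const z0)).differentiableWithinAt
  have hφ0 : φ 0 = 0 := by rw [hφ]; simp [h0]
  have hφbound : ∀ lam : ℂ, ‖lam‖ ≤ 1 → ‖φ lam‖ ≤ 1 := by
    intro lam hlam
    apply hle
    rw [norm_mul]
    calc ‖lam‖ * ‖z0‖ ≤ 1 * ‖z0‖ := mul_le_mul_of_nonneg_right hlam (norm_nonneg _)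
      _ = ‖z0‖ := one_mul _
  -- Schwarz inequality
  have hφ_le : ∀ lam : ℂ, ‖lam‖ < 1 → ‖φ lam‖ ≤ ‖lam‖ := by
    intro lam hlam
    have h1 : ∀ ε : ℝ, 0 < ε → ‖φ lam‖ ≤ (1 + ε) * ‖lam‖ := by
      intro ε hε
      have hmap : MapsTo φ (ball (0:ℂ) 1) (ball (φ 0) (1 + ε)) := by
        intro μ hμ
        rw [hφ0, mem_ball_zero_iff]
        exact lt_of_le_of_lt (hφbound μ (mem_ball_zero_iff.1 hμ).le) (by linarith)
      have h2 := Complex.dist_le_div_mul_dist_of_mapsTo_ball hφd (hmap.mono_right ball_subset_closedBall)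
        (mem_ball_zero_iff.2 hlam)
      rw [hφ0, dist_zero_right, dist_zero_right, div_one] at h2
      exact h2
    by_contra hgt
    push_neg at hgt
    rcases eq_or_lt_of_le (norm_nonneg lam) with hz | hz
    · rw [← hz] at hgt
      have : lam = 0 := norm_eq_zero.1 hz.symm
      rw [this, hφ0] at hgt
      simp at hgt
    · set ε := (‖φ lam‖ - ‖lam‖) / (2 * ‖lam‖) with hε
      have hεpos : 0 < ε := div_pos (by linarith) (by linarith)
      have h2 := h1 ε hεpos
      have h3 : ε * ‖lam‖ = (‖φ lam‖ - ‖lam‖) / 2 := by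
        have habs : ‖lam‖ ≠ 0 := by
          exact hz.ne'
        rw [hε]; field_simp [habs]
      nlinarith
  -- derivative of φ at 1
  have hq0' : HasDerivAt q (deriv q z0) z0 :=
    (hq.differentiableAt (isOpen_ball.mem_nhds hz0mem)).hasDerivAt
  have hq0'' : HasDerivAt q (deriv q z0) ((1:ℂ) * z0) := by rwa [one_mul]
  have hmul1 : HasDerivAt (fun lam : ℂ => lam * z0) z0 1 := by
    simpa using (hasDerivAt_id (1:ℂ)).mul_const z0
  have hφ1 : HasDerivAt φ (deriv q z0 * z0) 1 := HasDerivAt.comp 1 hq0'' hmul1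
  set D : ℂ := deriv q z0 * z0 with hD
  set c : ℂ := (starRingEnd ℂ) (q z0) with hc
  have hnsq : Complex.normSq (q z0) = 1 := by
    rw [← Complex.sq_norm, hqz0]; norm_num
  have hqc1 : q z0 * c = 1 := by
    rw [hc, Complex.mul_conj, hnsq, Complex.ofReal_one]
  have hcnorm : ‖c‖ = 1 := by
    rw [hc, Complex.norm_conj, hqz0]
  -- the real function ψ along the radius
  set ψ : ℝ → ℝ := fun t => (c * φ ((t : ℝ) : ℂ)).re with hψ
  have hφone : φ 1 = q z0 := by rw [hφ]; simp
  have hψ1 : ψ 1 = 1 := by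
    rw [hψ]
    simp only [Complex.ofReal_one]
    rw [hφone, mul_comm c (q z0), hqc1]
    simp
  have hψd : HasDerivAt ψ ((c * D).re) 1 := by
    have hcd : HasDerivAt (fun lam => c * φ lam) (c * D) (((1:ℝ):ℂ)) := by
      rw [Complex.ofReal_one]; exact hφ1.const_mul c
    exact hasDerivAt_re_comp hcd.comp_ofReal
  have hψle : ∀ t : ℝ, t ∈ Set.Ioo (0:ℝ) 1 → ψ t ≤ t := by
    intro t ht
    have h4 : ‖((t:ℝ):ℂ)‖ = t := by
      rw [Complex.norm_real, Real.norm_eq_abs, abs_of_pos ht.1]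
    calc ψ t ≤ ‖c * φ ((t:ℝ):ℂ)‖ := Complex.re_le_norm _
      _ = ‖φ ((t:ℝ):ℂ)‖ := by rw [norm_mul, hcnorm, one_mul]
      _ ≤ ‖((t:ℝ):ℂ)‖ := hφ_le _ (by rw [h4]; exact ht.2)
      _ = t := h4
  -- the slope inequality
  have hm1 : 1 ≤ (c * D).re := by
    have htend : Filter.Tendsto (slope ψ 1) (nhdsWithin 1 {(1:ℝ)}ᶜ) (nhds ((c * D).re)) :=
      hasDerivAt_iff_tendsto_slope.1 hψd
    have htend' : Filter.Tendsto (slope ψ 1) (nhdsWithin 1 (Set.Iio 1)) (nhds ((c * D).re)) :=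
      htend.mono_left (nhdsWithin_mono 1 (fun x hx => ne_of_lt hx))
    refine ge_of_tendsto htend' ?_
    filter_upwards [Ioo_mem_nhdsLT_of_mem
      (show (1:ℝ) ∈ Set.Ioc (0:ℝ) 1 by norm_num)] with t ht
    have h1 : ψ t ≤ t := hψle t ht
    rw [slope_def_field, le_div_iff_of_neg (by linarith [ht.2] : t - 1 < 0), hψ1]
    linarith
  -- circular direction : imaginary part vanishes
  set G : ℝ → ℂ := fun s => q (Complex.exp ((s:ℂ) * Complex.I) * z0) with hG
  have hG0 : G 0 = q z0 := by rw [hG]; simp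
  have hGmax : ∀ s : ℝ, Complex.normSq (G s) ≤ Complex.normSq (G 0) := by
    intro s
    rw [hG0]
    have h1 : ‖Complex.exp ((s:ℂ) * Complex.I) * z0‖ = ‖z0‖ := by
      rw [norm_mul, Complex.norm_exp_ofReal_mul_I, one_mul]
    have h2 : ‖G s‖ ≤ 1 := hle _ (le_of_eq h1)
    have h3 : Complex.normSq (G s) = ‖G s‖ ^ 2 := by
      rw [Complex.normSq_eq_norm_sq]
    rw [h3, hnsq]
    nlinarith [norm_nonneg (G s)]
  have hE : HasDerivAt G (Complex.I * D) 0 := by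
    have h1 : HasDerivAt (fun w : ℂ => w * Complex.I) Complex.I 0 := by
      simpa using (hasDerivAt_id (0:ℂ)).mul_const Complex.I
    have h2 := (h1.cexp).mul_const z0
    have hinner_c : HasDerivAt (fun w : ℂ => Complex.exp (w * Complex.I) * z0)
        (Complex.I * z0) (((0:ℝ):ℂ)) := by
      rw [Complex.ofReal_zero]
      simpa using h2
    have hinner : HasDerivAt (fun s : ℝ => Complex.exp ((s:ℂ) * Complex.I) * z0)
        (Complex.I * z0) 0 := hinner_c.comp_ofReal
    have hqf : HasFDerivAt q ((1 : ℂ →L[ℂ] ℂ).smulRight (deriv q z0)) z0 := hq0'.hasFDerivAt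
    have hqfr := hqf.restrictScalars ℝ
    have heqpt : z0 = Complex.exp (((0:ℝ):ℂ) * Complex.I) * z0 := by simp
    have hcomp := hqfr.comp_hasDerivAt_of_eq 0 hinner heqpt
    have happ : (((1 : ℂ →L[ℂ] ℂ).smulRight (deriv q z0)).restrictScalars ℝ)
        (Complex.I * z0) = Complex.I * D := by
      rw [ContinuousLinearMap.coe_restrictScalars']
      simp [ContinuousLinearMap.smulRight_apply, smul_eq_mul, hD]
      ring
    rw [happ] at hcomp
    exact hcomp
  have him : (c * D).im = 0 := by
    set χ : ℝ → ℝ := fun s => (G s).re * (G s).re + (G s).im * (G s).im with hχ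
    have hχmax : IsLocalMax χ 0 := by
      apply Filter.Eventually.of_forall
      intro s
      have h5 := hGmax s
      rw [Complex.normSq_apply, Complex.normSq_apply] at h5
      exact h5
    have hre := hasDerivAt_re_comp hE
    have him' := hasDerivAt_im_comp hE
    have hχd : HasDerivAt χ
        ((Complex.I * D).re * (G 0).re + (G 0).re * (Complex.I * D).re +
         ((Complex.I * D).im * (G 0).im + (G 0).im * (Complex.I * D).im)) 0 :=
      (hre.mul hre).add (him'.mul him')
    have hzero := hχmax.hasDerivAt_eq_zero hχd
    rw [hG0] at hzero
    have hIDre : (Complex.I * D).re = -D.im := by simp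
    have hIDim : (Complex.I * D).im = D.re := by simp
    rw [hIDre, hIDim] at hzero
    rw [hc, Complex.mul_im, Complex.conj_re, Complex.conj_im]
    linarith
  -- conclude
  refine ⟨z0, hz0mem, hqz0, (c * D).re, hm1, ?_⟩
  have hcD : c * D = (((c * D).re : ℝ) : ℂ) := Complex.ext (by simp) (by simp [him])
  have h2 : q z0 * (c * D) = D := by rw [← mul_assoc, hqc1, one_mul]
  calc z0 * deriv q z0 = D := by rw [hD]; ring
    _ = q z0 * (c * D) := h2.symm
    _ = (((c * D).re : ℝ) : ℂ) * q z0 := by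
        conv_lhs => rw [hcD]
        ring


theorem stmt_8 (β : ℝ) (hβ : Real.exp 1 + (Real.exp 1)⁻¹ ≤ β)
    (p : ℂ → ℂ) (hp : DifferentiableOn ℂ p unitDisk) (hp0 : p 0 = 1)
    (hpne : ∀ z ∈ unitDisk, p z ≠ 0)
    (hsub : Subord (fun z => p z + (β : ℂ) * z * deriv p z / p z) Complex.exp) :
    Subord p Complex.exp := by
  have hunit : unitDisk = ball (0:ℂ) 1 := rfl
  rw [hunit] at hp hpne
  obtain ⟨w, hwd, hw0, hwlt, hweq⟩ := hsub
  obtain ⟨q, hq0, hqd, hpq⟩ := exists_log hp hp0 hpne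
  have hqdiff : DifferentiableOn ℂ q (ball (0:ℂ) 1) := fun z hz =>
    ((hqd z hz).differentiableAt).differentiableWithinAt
  refine ⟨q, by rw [hunit]; exact hqdiff, hq0, ?_, by rw [hunit]; exact hpq⟩
  rw [hunit]
  intro z hz
  by_contra hge
  push_neg at hge
  obtain ⟨z0, hz0mem, hqz0, m, hm, hjack⟩ := jack hqdiff hq0 hz hge
  have hweq0 : p z0 + (β : ℂ) * z0 * deriv p z0 / p z0 = Complex.exp (w z0) := by
    have := hweq z0 (by rw [hunit]; exact hz0mem)
    simpa using this
  have hpz0 : p z0 = Complex.exp (q z0) := hpq z0 hz0mem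
  have hq' : deriv q z0 = deriv p z0 / p z0 := (hqd z0 hz0mem).deriv
  have hkey : (β : ℂ) * z0 * deriv p z0 / p z0 = (β : ℂ) * ((m : ℂ) * q z0) := by
    have h1 : (β : ℂ) * z0 * deriv p z0 / p z0 = (β : ℂ) * (z0 * (deriv p z0 / p z0)) := by
      ring
    rw [h1, ← hq', hjack]
  rw [hkey, hpz0] at hweq0
  exact outside hβ hm hqz0 (hwlt z0 (by rw [hunit]; exact hz0mem)) hweq0
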